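/- In any graph G, if P is a collection of vertex-disjoint paths covering all vertices of G such that no two paths in P can be merged (i.e., P has minimum size among path covers), then choosing one endpoint from each path yields an independent set; consequently the path cover number of G is at most the independence number of G. -/

import Mathlib

open Finset

variable {V : Type*}

/-- A nonempty list of vertices forms a path in `G`: consecutive vertices are adjacent
and no vertex repeats. Lists of length 1 are paths of length 0 (single vertices). -/
def IsPathList (G : SimpleGraph V) (l : List V) : Prop :=
  l ≠ [] ∧ l.Chain' G.Adj ∧ l.Nodup

/-- A path cover of `G`: a finite collection of vertex-disjoint paths covering all
vertices. -/
def IsPathCover [DecidableEq V] [Fintype V] (G : SimpleGraph V) (P : Finset (List V)) : Prop :=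
  (∀ l ∈ P, IsPathList G l) ∧
  (∀ l ∈ P, ∀ l' ∈ P, l ≠ l' → ∀ v, v ∈ l → v ∉ l') ∧
  (∀ v : V, ∃ l ∈ P, v ∈ l)

/-- The path cover number: the minimum size of a path cover. -/
noncomputable def pathCoverNumber [DecidableEq V] [Fintype V] (G : SimpleGraph V) : ℕ :=
  sInf {k : ℕ | ∃ P : Finset (List V), IsPathCover G P ∧ P.card = k}

/-- The independence number of `G`. -/
noncomputable def indepNumber [DecidableEq V] [Fintype V] (G : SimpleGraph V) : ℕ :=
  sSup {k : ℕ | ∃ s : Finset V, (∀ u ∈ s, ∀ v ∈ s, ¬ G.Adj u v) ∧ s.card = k}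

lemma merge_aux [DecidableEq V] [Fintype V] (G : SimpleGraph V) (P : Finset (List V))
    (hP : IsPathCover G P) {l l' : List V} (hl : l ∈ P) (hl' : l' ∈ P) (hne : l ≠ l')
    {u w : V} (hu : l.head? = some u) (hw : l'.head? = some w) (hadj : G.Adj u w) :
    ∃ P' : Finset (List V), IsPathCover G P' ∧ P'.card + 1 = P.card := by
  obtain ⟨hpath, hdisj, hcov⟩ := hP
  set m : List V := l.reverse ++ l' with hm
  set s : Finset (List V) := (P.erase l).erase l' with hs
  have hsub : s ⊆ P := (Finset.erase_subset _ _).trans (Finset.erase_subset _ _)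
  have hmem_m : ∀ v, v ∈ m ↔ v ∈ l ∨ v ∈ l' := by
    intro v; simp [hm, List.mem_append]
  have huL : u ∈ l := List.mem_of_mem_head? hu
  have hwL : w ∈ l' := List.mem_of_mem_head? hw
  have hLdisj : ∀ v, v ∈ l → v ∉ l' := hdisj l hl l' hl' hne
  have hlp := hpath l hl
  have hlp' := hpath l' hl'
  have hmpath : IsPathList G m := by
    refine ⟨?_, ?_, ?_⟩
    · intro h; rw [hm, List.append_eq_nil_iff] at h; exact hlp'.1 h.2
    · rw [hm]; show List.IsChain _ _; rw [List.isChain_append]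
      refine ⟨?_, hlp'.2.1, ?_⟩
      · rw [List.isChain_reverse]
        have : (fun a b => G.Adj b a) = G.Adj := by
          ext a b; exact ⟨fun h => h.symm, fun h => h.symm⟩
        rw [this]; exact hlp.2.1
      · intro x hx y hy
        rw [List.getLast?_reverse, hu] at hx
        rw [hw] at hy
        simp at hx hy; subst hx; subst hy; exact hadj
    · rw [hm, List.nodup_append]
      exact ⟨List.nodup_reverse.2 hlp.2.2, hlp'.2.2,
        fun v hv b hb h => hLdisj v (List.mem_reverse.1 hv) (h ▸ hb)⟩
  have hs_ne : ∀ a ∈ s, a ≠ l ∧ a ≠ l' := by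
    intro a ha
    rw [hs, Finset.mem_erase, Finset.mem_erase] at ha
    exact ⟨ha.2.1, ha.1⟩
  have hm_not : m ∉ s := by
    intro hms
    have := hdisj m (hsub hms) l hl (hs_ne m hms).1 u ((hmem_m u).2 (Or.inl huL))
    exact this huL
  refine ⟨insert m s, ⟨?_, ?_, ?_⟩, ?_⟩
  · intro a ha
    rcases Finset.mem_insert.1 ha with rfl | ha
    · exact hmpath
    · exact hpath a (hsub ha)
  · intro a ha b hb hab v hva hvb
    rcases Finset.mem_insert.1 ha with rfl | ha <;> rcases Finset.mem_insert.1 hb with rfl | hb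
    · exact hab rfl
    · rcases (hmem_m v).1 hva with h | h
      · exact hdisj l hl b (hsub hb) (Ne.symm (hs_ne b hb).1) v h hvb
      · exact hdisj l' hl' b (hsub hb) (Ne.symm (hs_ne b hb).2) v h hvb
    · rcases (hmem_m v).1 hvb with h | h
      · exact hdisj a (hsub ha) l hl (hs_ne a ha).1 v hva h
      · exact hdisj a (hsub ha) l' hl' (hs_ne a ha).2 v hva h
    · exact hdisj a (hsub ha) b (hsub hb) hab v hva hvb
  · intro v
    obtain ⟨l₀, hl₀, hv⟩ := hcov v
    by_cases h1 : l₀ = l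
    · exact ⟨m, Finset.mem_insert_self _ _, (hmem_m v).2 (Or.inl (h1 ▸ hv))⟩
    by_cases h2 : l₀ = l'
    · exact ⟨m, Finset.mem_insert_self _ _, (hmem_m v).2 (Or.inr (h2 ▸ hv))⟩
    · exact ⟨l₀, Finset.mem_insert_of_mem (by rw [hs]; simp [Finset.mem_erase, h1, h2, hl₀]),
        hv⟩
  · rw [Finset.card_insert_of_notMem hm_not]
    have h1 : l' ∈ P.erase l := Finset.mem_erase.2 ⟨Ne.symm hne, hl'⟩
    have hc1 : (P.erase l).card + 1 = P.card := Finset.card_erase_add_one hl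
    have hc2 : s.card + 1 = (P.erase l).card := Finset.card_erase_add_one h1
    omega

/-- If `P` is a minimum path cover of `G`, then the set of starting vertices of the
paths of `P` is an independent set; consequently the path cover number of `G` is at
most the independence number of `G`. -/
theorem stmt_2 [DecidableEq V] [Fintype V] (G : SimpleGraph V) (P : Finset (List V))
    (hP : IsPathCover G P) (hmin : P.card = pathCoverNumber G) :
    (∀ u ∈ {v : V | ∃ l ∈ P, l.head? = some v}, ∀ w ∈ {v : V | ∃ l ∈ P, l.head? = some v},
      ¬ G.Adj u w) ∧
    pathCoverNumber G ≤ indepNumber G := by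
  have hindep : ∀ u ∈ {v : V | ∃ l ∈ P, l.head? = some v},
      ∀ w ∈ {v : V | ∃ l ∈ P, l.head? = some v}, ¬ G.Adj u w := by
    intro u hu w hw hadj
    obtain ⟨l, hl, hul⟩ := hu
    obtain ⟨l', hl', hwl⟩ := hw
    by_cases hne : l = l'
    · subst hne
      rw [hul] at hwl
      injection hwl with h
      subst h
      exact G.irrefl hadj
    · obtain ⟨P', hP', hcard⟩ := merge_aux G P hP hl hl' hne hul hwl hadj
      have h1 : pathCoverNumber G ≤ P'.card := Nat.sInf_le ⟨P', hP', rfl⟩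
      omega
  refine ⟨hindep, ?_⟩
  -- build independent finset from heads
  by_cases hPe : P = ∅
  · have : pathCoverNumber G = 0 := by rw [← hmin, hPe]; rfl
    omega
  · obtain ⟨l₀, hl₀⟩ := Finset.nonempty_iff_ne_empty.2 hPe
    have hne₀ : l₀ ≠ [] := (hP.1 l₀ hl₀).1
    have : Inhabited V := ⟨l₀.head hne₀⟩
    have hhead : ∀ l ∈ P, l.head? = some l.headI := by
      intro l hl
      cases l with
      | nil => exact absurd rfl (hP.1 _ hl).1
      | cons a t => rfl
    set t : Finset V := P.image List.headI with ht
    have htmem : ∀ v ∈ t, ∃ l ∈ P, l.head? = some v := by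
      intro v hv
      obtain ⟨l, hl, rfl⟩ := Finset.mem_image.1 hv
      exact ⟨l, hl, hhead l hl⟩
    have htindep : ∀ a ∈ t, ∀ b ∈ t, ¬ G.Adj a b := by
      intro a ha b hb
      exact hindep a (htmem a ha) b (htmem b hb)
    have htcard : t.card = P.card := by
      rw [ht]
      apply Finset.card_image_of_injOn
      intro a ha b hb hab
      by_contra hne
      have h1 : a.headI ∈ a := by
        have := hhead a ha; exact List.mem_of_mem_head? (this ▸ rfl)
      have h2 : b.headI ∈ b := by
        have := hhead b hb; exact List.mem_of_mem_head? (this ▸ rfl)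
      exact hP.2.1 a ha b hb hne a.headI h1 (hab ▸ h2)
    have hmemS : P.card ∈ {k : ℕ | ∃ s : Finset V,
        (∀ u ∈ s, ∀ v ∈ s, ¬ G.Adj u v) ∧ s.card = k} := ⟨t, htindep, htcard⟩
    have hbdd : BddAbove {k : ℕ | ∃ s : Finset V,
        (∀ u ∈ s, ∀ v ∈ s, ¬ G.Adj u v) ∧ s.card = k} := by
      refine ⟨Fintype.card V, ?_⟩
      rintro k ⟨s, _, rfl⟩
      exact Finset.card_le_univ s
    calc pathCoverNumber G = P.card := hmin.symm
      _ ≤ indepNumber G := le_csSup hbdd hmemS
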